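/- Let A, ε_l, ε_m, ε_y : Ω → ℝ be square-integrable random variables with E[ε_l] = E[ε_m] = E[ε_y] = 0, Cov(A, ε_l) = Cov(A, ε_m) = Cov(A, ε_y) = 0, Cov(ε_m, ε_l) = Cov(ε_m, ε_y) = 0, Var(ε_l) = σ² > 0, and Cov(ε_y, ε_l) = ρ. Let α0, α2, α3, β0, β1, β2, δ0, δ1 ∈ ℝ and define L = δ0 + δ1·A + ε_l, M = β0 + β1·A + β2·L + ε_m, and Y = α0 + α2·M + α3·L + ε_y (so A has no direct effect on Y). Set c0 = α0 − δ0·ρ/σ², c1 = −δ1·ρ/σ², c2 = α3 + ρ/σ², c3 = α2, and R = Y − (c0 + c1·A + c2·L + c3·M). Then E[R] = 0 and Cov(R, A) = Cov(R, L) = Cov(R, M) = 0, so (c0, c1, c2, c3) satisfy the normal equations for the least-squares linear regression of Y on (1, A, L, M); moreover if ρ ≠ 0 and δ1 ≠ 0 then c1 = −δ1·ρ/σ² ≠ 0. -/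

import Mathlib

open MeasureTheory ProbabilityTheory

/-- Covariance of two real random variables. -/
noncomputable def cov {Ω : Type*} [MeasurableSpace Ω] (P : Measure Ω) (X Y : Ω → ℝ) : ℝ :=
  ∫ ω, (X ω - ∫ x, X x ∂P) * (Y ω - ∫ x, Y x ∂P) ∂P

section Aux

variable {Ω : Type*} [MeasurableSpace Ω] (P : Measure Ω) [IsProbabilityMeasure P]

lemma integrable_mul_of_memL2 {f g : Ω → ℝ} (hf : MemLp f 2 P) (hg : MemLp g 2 P) :
    Integrable (fun ω => f ω * g ω) P := by
  have h : MemLp (f • g) 1 P := by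
    haveI : ENNReal.HolderTriple 2 2 1 := ⟨by simp only [inv_one]; exact ENNReal.inv_two_add_inv_two⟩
    exact hg.smul hf
  exact memLp_one_iff_integrable.mp h

lemma cov_comm (X Y : Ω → ℝ) : cov P X Y = cov P Y X := by
  unfold cov; congr 1; funext ω; ring

lemma cov_self_eq_variance {X : Ω → ℝ} (hX : MemLp X 2 P) : cov P X X = variance X P := by
  rw [variance_eq_integral hX.aemeasurable]
  unfold cov
  congr 1; funext ω; simp [pow_two]

lemma cov_smul_right (X Y : Ω → ℝ) (c : ℝ) :
    cov P X (fun ω => c * Y ω) = c * cov P X Y := by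
  have h1 : cov P X (fun ω => c * Y ω)
      = ∫ ω, c * ((X ω - ∫ x, X x ∂P) * (Y ω - ∫ x, Y x ∂P)) ∂P := by
    unfold cov
    rw [integral_const_mul]
    congr 1; funext ω; beta_reduce; ring
  rw [h1, integral_const_mul]
  rfl

lemma cov_add_right {X Y Z : Ω → ℝ} (hX : MemLp X 2 P) (hY : MemLp Y 2 P)
    (hZ : MemLp Z 2 P) :
    cov P X (fun ω => Y ω + Z ω) = cov P X Y + cov P X Z := by
  have hXY : Integrable (fun ω => (X ω - ∫ x, X x ∂P) * (Y ω - ∫ x, Y x ∂P)) P :=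
    integrable_mul_of_memL2 P (hX.sub (memLp_const _)) (hY.sub (memLp_const _))
  have hXZ : Integrable (fun ω => (X ω - ∫ x, X x ∂P) * (Z ω - ∫ x, Z x ∂P)) P :=
    integrable_mul_of_memL2 P (hX.sub (memLp_const _)) (hZ.sub (memLp_const _))
  unfold cov
  rw [integral_add (hY.integrable one_le_two) (hZ.integrable one_le_two), ← integral_add hXY hXZ]
  congr 1; funext ω; ring

lemma cov_sub_right {X Y Z : Ω → ℝ} (hX : MemLp X 2 P) (hY : MemLp Y 2 P)
    (hZ : MemLp Z 2 P) :
    cov P X (fun ω => Y ω - Z ω) = cov P X Y - cov P X Z := by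
  have hXY : Integrable (fun ω => (X ω - ∫ x, X x ∂P) * (Y ω - ∫ x, Y x ∂P)) P :=
    integrable_mul_of_memL2 P (hX.sub (memLp_const _)) (hY.sub (memLp_const _))
  have hXZ : Integrable (fun ω => (X ω - ∫ x, X x ∂P) * (Z ω - ∫ x, Z x ∂P)) P :=
    integrable_mul_of_memL2 P (hX.sub (memLp_const _)) (hZ.sub (memLp_const _))
  unfold cov
  rw [integral_sub (hY.integrable one_le_two) (hZ.integrable one_le_two), ← integral_sub hXY hXZ]
  congr 1; funext ω; ring

lemma cov_const_add_right (X : Ω → ℝ) {Y : Ω → ℝ} (c : ℝ) (hY : Integrable Y P) :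
    cov P X (fun ω => c + Y ω) = cov P X Y := by
  unfold cov
  rw [integral_add (integrable_const c) hY, integral_const]
  simp only [probReal_univ, ENNReal.toReal_one, smul_eq_mul, one_mul]
  congr 1; funext ω; ring

end Aux

/-- The "explaining away" phenomenon in the two-mediator model with unobserved
confounding between `L` and `Y` (encoded by `ρ = Cov(ε_y, ε_l)`): the coefficients
`c0 = α0 − δ0·ρ/σ², c1 = −δ1·ρ/σ², c2 = α3 + ρ/σ², c3 = α2` satisfy the normal
equations for the least-squares regression of `Y` on `(1, A, L, M)` (the residual `R`
has mean zero and is uncorrelated with `A`, `L`, `M`); moreover the coefficient `c1`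
of `A` does not vanish when `ρ ≠ 0` and `δ1 ≠ 0`, even though `A` has no direct
effect on `Y`. -/
theorem explaining_away_regression_coefficient
    {Ω : Type*} [MeasurableSpace Ω] (P : Measure Ω) [IsProbabilityMeasure P]
    (A εl εm εy : Ω → ℝ)
    (hA : MemLp A 2 P) (hεl : MemLp εl 2 P) (hεm : MemLp εm 2 P) (hεy : MemLp εy 2 P)
    (hεl0 : ∫ ω, εl ω ∂P = 0) (hεm0 : ∫ ω, εm ω ∂P = 0) (hεy0 : ∫ ω, εy ω ∂P = 0)
    (hAεl : cov P A εl = 0) (hAεm : cov P A εm = 0) (hAεy : cov P A εy = 0)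
    (hεmεl : cov P εm εl = 0) (hεmεy : cov P εm εy = 0)
    (σ2 ρ : ℝ) (hσ2 : variance εl P = σ2) (hσ2pos : 0 < σ2)
    (hρ : cov P εy εl = ρ)
    (α0 α2 α3 β0 β1 β2 δ0 δ1 : ℝ)
    (L M Y : Ω → ℝ)
    (hL : ∀ ω, L ω = δ0 + δ1 * A ω + εl ω)
    (hM : ∀ ω, M ω = β0 + β1 * A ω + β2 * L ω + εm ω)
    (hY : ∀ ω, Y ω = α0 + α2 * M ω + α3 * L ω + εy ω)
    (c0 c1 c2 c3 : ℝ)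
    (hc0 : c0 = α0 - δ0 * ρ / σ2) (hc1 : c1 = -(δ1 * ρ / σ2))
    (hc2 : c2 = α3 + ρ / σ2) (hc3 : c3 = α2)
    (R : Ω → ℝ)
    (hR : ∀ ω, R ω = Y ω - (c0 + c1 * A ω + c2 * L ω + c3 * M ω)) :
    (∫ ω, R ω ∂P = 0)
    ∧ cov P R A = 0 ∧ cov P R L = 0 ∧ cov P R M = 0
    ∧ (ρ ≠ 0 → δ1 ≠ 0 → c1 ≠ 0) := by
  have hσ : σ2 ≠ 0 := hσ2pos.ne'
  set k : ℝ := ρ / σ2 with hk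
  -- The residual is exactly `εy - k • εl`.
  have hRe : R = fun ω => εy ω - k * εl ω := by
    funext ω
    rw [hR ω, hY ω, hM ω, hL ω, hc0, hc1, hc2, hc3, hk]
    field_simp
    ring
  have hkεl : MemLp (fun ω => k * εl ω) 2 P := hεl.const_mul k
  have hRL2 : MemLp R 2 P := by rw [hRe]; exact hεy.sub hkεl
  -- Mean zero
  have hIR : ∫ ω, R ω ∂P = 0 := by
    rw [hRe, integral_sub (hεy.integrable one_le_two)
      ((hεl.integrable one_le_two).const_mul k), integral_const_mul, hεy0, hεl0]
    ring
  -- Covariances with the basic variables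
  have covRεy : ∀ X : Ω → ℝ, MemLp X 2 P →
      cov P X R = cov P X εy - k * cov P X εl := by
    intro X hX
    rw [hRe, cov_sub_right P hX hεy hkεl, cov_smul_right]
  have covRA : cov P R A = 0 := by
    rw [cov_comm, covRεy A hA, hAεy, hAεl]; ring
  have covRεl : cov P R εl = 0 := by
    rw [cov_comm, covRεy εl hεl, cov_comm P εl εy, hρ,
      cov_self_eq_variance P hεl, hσ2, hk]
    field_simp
    ring
  have covRεm : cov P R εm = 0 := by
    rw [cov_comm, covRεy εm hεm, hεmεy, hεmεl]; ring
  -- Membership of L and M in L²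
  have hLfun : L = fun ω => δ0 + (δ1 * A ω + εl ω) := by funext ω; rw [hL ω]; ring
  have hLL2 : MemLp L 2 P := by
    rw [hLfun]; exact (memLp_const δ0).add ((hA.const_mul δ1).add hεl)
  have hMfun : M = fun ω => β0 + (β1 * A ω + (β2 * L ω + εm ω)) := by
    funext ω; rw [hM ω]; ring
  have hML2 : MemLp M 2 P := by
    rw [hMfun]; exact (memLp_const β0).add ((hA.const_mul β1).add ((hLL2.const_mul β2).add hεm))
  -- Covariance with L
  have covRL : cov P R L = 0 := by
    have hI1 : Integrable (fun ω => δ1 * A ω + εl ω) P :=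
      ((hA.integrable one_le_two).const_mul δ1).add (hεl.integrable one_le_two)
    rw [hLfun, cov_const_add_right P R δ0 hI1,
      cov_add_right P hRL2 (hA.const_mul δ1) hεl, cov_smul_right, covRA, covRεl]
    ring
  -- Covariance with M
  have covRM : cov P R M = 0 := by
    have hI2 : Integrable (fun ω => β1 * A ω + (β2 * L ω + εm ω)) P :=
      ((hA.integrable one_le_two).const_mul β1).add
        (((hLL2.integrable one_le_two).const_mul β2).add (hεm.integrable one_le_two))
    rw [hMfun, cov_const_add_right P R β0 hI2,
      cov_add_right P hRL2 (hA.const_mul β1)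
        (show MemLp (fun ω => β2 * L ω + εm ω) 2 P from (hLL2.const_mul β2).add hεm),
      cov_smul_right, covRA,
      cov_add_right P hRL2 (hLL2.const_mul β2) hεm, cov_smul_right, covRL, covRεm]
    ring
  refine ⟨hIR, covRA, covRL, covRM, ?_⟩
  intro hρ0 hδ0'
  rw [hc1]
  simp [div_eq_zero_iff, hρ0, hδ0', hσ]
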